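/- Fix a budget rule g : ℝ₊^C → ℝ₊^C and any Highest-Bidder-Wins auction with budget rule g (i.e., any tie-breaking rule). Let k, m be positive integers with k dividing m, and consider the instance with m items and C = m centers, each representing ℓ = m/k individuals, where center one's i-th individual values items (i−1)k+1,…,ik at 1/√k each and all other items at 0, and every individual of every other center values all m items at 1/√m. (This valuation matrix has rank m/k and is 1-incoherent.) Then at every pure Nash equilibrium bid profile, the total fraction of items received by center one is at most 1, and consequently the induced allocation ỹ satisfies GMW_1(y*)/GMW_1(ỹ) ≥ (m/√k)/(√m + 1/√k − 1/√m), where y* maximizes GMW_1 over feasible allocations. In particular the utilitarian Price of Anarchy of every Highest-Bidder-Wins auction on instances with rank·incoherence equal to ℓ is Ω(√ℓ). -/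

import Mathlib

open scoped BigOperators

/-- The coherence `μ(U)` of a subspace `U` of `ℝ^m`:
`μ(U) = (m / dim U) · max_{j ∈ [m]} ‖P_U e_j‖₂²`. -/
noncomputable def coherence {m : ℕ} (U : Submodule ℝ (EuclideanSpace ℝ (Fin m))) : ℝ :=
  ((m : ℝ) / (Module.finrank ℝ U : ℝ)) *
    ⨆ j : Fin m,
      ‖(U.orthogonalProjection (EuclideanSpace.single j 1) : EuclideanSpace ℝ (Fin m))‖ ^ 2

/-- The column space of an `m × n` real matrix, as a subspace of `ℝ^m`. -/
noncomputable def colSpace {m n : ℕ} (A : Matrix (Fin m) (Fin n) ℝ) :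
    Submodule ℝ (EuclideanSpace ℝ (Fin m)) :=
  Submodule.span ℝ (Set.range fun i : Fin n => (EuclideanSpace.equiv (Fin m) ℝ).symm fun j => A j i)

/-- An allocation is feasible if all fractions are nonnegative and each item is
allocated at most once in total. -/
def Feasible {m n : ℕ} (y : Fin m → Fin n → ℝ) : Prop :=
  (∀ j i, 0 ≤ y j i) ∧ ∀ j, ∑ i, y j i ≤ 1

/-- The (additive) utility of individual `i` under allocation `y`:
`u_i(y) = Σ_j A_{j,i} · y_{j,i}`. -/
noncomputable def util {m n : ℕ} (A : Matrix (Fin m) (Fin n) ℝ)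
    (y : Fin m → Fin n → ℝ) (i : Fin n) : ℝ :=
  ∑ j, A j i * y j i

/-- The generalized `p`-mean welfare `GMW_p(y) = ((1/n) Σᵢ uᵢ(y)^p)^{1/p}`
(real powers). -/
noncomputable def GMW {m n : ℕ} (p : ℝ) (A : Matrix (Fin m) (Fin n) ℝ)
    (y : Fin m → Fin n → ℝ) : ℝ :=
  ((1 / (n : ℝ)) * ∑ i, util A y i ^ p) ^ (1 / p)

open scoped Classical

/-- The set of individuals represented by center `c`. -/
def Ic {n C : ℕ} (ctr : Fin n → Fin C) (c : Fin C) : Finset (Fin n) :=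
  Finset.univ.filter fun i => ctr i = c

/-- Center `c` respects its budget: the sum of its bids over the items on which it is a
(weakly) highest bidder is at most its budget `B c`. -/
def BudgetOK {m C : ℕ} (B : Fin C → ℝ) (b : Fin m → Fin C → ℝ) (c : Fin C) : Prop :=
  ∑ j ∈ Finset.univ.filter (fun j : Fin m => ∀ c', b j c' ≤ b j c), b j c ≤ B c

/-- `X` is a Highest-Bidder-Wins allocation rule with budgets `B` (for some tie-breaking rule):
on nonnegative bids it produces nonnegative fractions summing to at most one per item; only
(weakly) highest bidders receive a positive fraction of an item; an item with a positive bid is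
fully allocated provided all its (weakly) highest bidders respect their budgets; a strict
highest bidder respecting its budget receives the item in full; items with no positive bid are
unallocated; and a center violating its budget constraint receives nothing. -/
structure IsHBW {m C : ℕ} (B : Fin C → ℝ)
    (X : (Fin m → Fin C → ℝ) → Fin m → Fin C → ℝ) : Prop where
  nonneg : ∀ b, (∀ j c, 0 ≤ b j c) → ∀ j c, 0 ≤ X b j c
  sum_le_one : ∀ b, (∀ j c, 0 ≤ b j c) → ∀ j, ∑ c, X b j c ≤ 1
  highest : ∀ b, (∀ j c, 0 ≤ b j c) → ∀ j c, X b j c ≠ 0 → ∀ c', b j c' ≤ b j c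
  full : ∀ b, (∀ j c, 0 ≤ b j c) → ∀ j, (∃ c, 0 < b j c) →
    (∀ c, (∀ c', b j c' ≤ b j c) → BudgetOK B b c) → ∑ c, X b j c = 1
  strict_win : ∀ b, (∀ j c, 0 ≤ b j c) → ∀ j c, (∀ c', c' ≠ c → b j c' < b j c) →
    BudgetOK B b c → X b j c = 1
  no_bid : ∀ b, (∀ j c, 0 ≤ b j c) → ∀ j, (∀ c, b j c = 0) → ∀ c, X b j c = 0
  over_budget : ∀ b, (∀ j c, 0 ≤ b j c) → ∀ c, ¬ BudgetOK B b c → ∀ j, X b j c = 0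

/-- The best objective value center `c` (with individual set `S`) can achieve by redistributing
the item fractions `xc` it received among its own individuals. -/
noncomputable def centerBest {m n : ℕ} (obj : (Fin m → Fin n → ℝ) → ℝ)
    (S : Finset (Fin n)) (xc : Fin m → ℝ) : ℝ :=
  sSup {v : ℝ | ∃ z : Fin m → Fin n → ℝ, (∀ j i, 0 ≤ z j i) ∧
    (∀ j, ∑ i ∈ S, z j i ≤ xc j) ∧ v = obj z}

/-- `b` is a pure Nash equilibrium of the auction with allocation rule `X`: bids are
nonnegative, and no center `c` can strictly increase the best objective value achievable from
its received fractions by unilaterally changing its (nonnegative) bids. -/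
def HBWEquilibrium {m n C : ℕ} (X : (Fin m → Fin C → ℝ) → Fin m → Fin C → ℝ)
    (obj : Fin C → (Fin m → Fin n → ℝ) → ℝ) (ctr : Fin n → Fin C)
    (b : Fin m → Fin C → ℝ) : Prop :=
  (∀ j c, 0 ≤ b j c) ∧
  ∀ (c : Fin C) (β : Fin m → ℝ), (∀ j, 0 ≤ β j) →
    centerBest (obj c) (Ic ctr c)
        (fun j => X (fun j' => Function.update (b j') c (β j')) j c) ≤
      centerBest (obj c) (Ic ctr c) (fun j => X b j c)

/-- `y` is an allocation induced by giving each center `c` the item fractions `xc c` and letting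
it redistribute them among its own individuals so as to maximize its objective `obj c`. -/
def Induced {m n C : ℕ} (obj : Fin C → (Fin m → Fin n → ℝ) → ℝ) (ctr : Fin n → Fin C)
    (xc : Fin C → Fin m → ℝ) (y : Fin m → Fin n → ℝ) : Prop :=
  (∀ j i, 0 ≤ y j i) ∧ (∀ c j, ∑ i ∈ Ic ctr c, y j i ≤ xc c j) ∧
  ∀ c z, (∀ (j : Fin m) (i : Fin n), 0 ≤ z j i) →
    (∀ j, ∑ i ∈ Ic ctr c, z j i ≤ xc c j) → obj c z ≤ obj c y


lemma nat_div_eq_iff' {a b k : ℕ} (hk : 0 < k) : a / k = b ↔ b * k ≤ a ∧ a < (b+1)*k := by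
  constructor
  · intro h
    constructor
    · calc b * k = a / k * k := by rw [h]
        _ ≤ a := Nat.div_mul_le_self a k
    · have h1 : k * (a/k) + a % k = a := Nat.div_add_mod a k
      have h2 : a % k < k := Nat.mod_lt a hk
      calc a = k*(a/k) + a % k := h1.symm
        _ < k*(a/k) + k := by omega
        _ = (a/k+1)*k := by ring
        _ = (b+1)*k := by rw [h]
  · intro ⟨h1, h2⟩
    exact Nat.div_eq_of_lt_le h1 h2

lemma centerBest_le' {m n : ℕ} {obj : (Fin m → Fin n → ℝ) → ℝ} {S : Finset (Fin n)}
    {xc : Fin m → ℝ} {M : ℝ} (hM : 0 ≤ M)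
    (hub : ∀ z : Fin m → Fin n → ℝ, (∀ j i, 0 ≤ z j i) →
      (∀ j, ∑ i ∈ S, z j i ≤ xc j) → obj z ≤ M) :
    centerBest obj S xc ≤ M := by
  apply Real.sSup_le _ hM
  rintro v ⟨z, hz1, hz2, rfl⟩
  exact hub z hz1 hz2

lemma le_centerBest' {m n : ℕ} {obj : (Fin m → Fin n → ℝ) → ℝ} {S : Finset (Fin n)}
    {xc : Fin m → ℝ} (M : ℝ)
    (hub : ∀ z : Fin m → Fin n → ℝ, (∀ j i, 0 ≤ z j i) →
      (∀ j, ∑ i ∈ S, z j i ≤ xc j) → obj z ≤ M)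
    (z : Fin m → Fin n → ℝ) (hz1 : ∀ j i, 0 ≤ z j i)
    (hz2 : ∀ j, ∑ i ∈ S, z j i ≤ xc j) :
    obj z ≤ centerBest obj S xc := by
  apply le_csSup
  · exact ⟨M, by rintro v ⟨z', h1, h2, rfl⟩; exact hub z' h1 h2⟩
  · exact ⟨z, hz1, hz2, rfl⟩

/-- Utilitarian welfare `GMW_1(y) = (1/n) Σᵢ uᵢ(y)`. -/
noncomputable def GMW1 {m n : ℕ} (A : Matrix (Fin m) (Fin n) ℝ)
    (y : Fin m → Fin n → ℝ) : ℝ :=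
  (1 / (n : ℝ)) * ∑ i, util A y i

/-- Center `c`'s utilitarian objective `GMW_{c,1}(y) = (1/|I_c|) Σ_{i∈I_c} uᵢ(y)`. -/
noncomputable def GMW1c {m n C : ℕ} (A : Matrix (Fin m) (Fin n) ℝ)
    (ctr : Fin n → Fin C) (c : Fin C) (y : Fin m → Fin n → ℝ) : ℝ :=
  (1 / ((Ic ctr c).card : ℝ)) * ∑ i ∈ Ic ctr c, util A y i

set_option maxHeartbeats 1000000 in
/-- **Theorem (utilitarian lower bound for Highest-Bidder-Wins auctions).** Fix a budget rule `g`
and any Highest-Bidder-Wins auction `X` with budgets `g(ℓ, …, ℓ)`, where `ℓ = m/k`. Consider the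
instance with `m` items and `C = m` centers, each representing `ℓ` individuals (individual `i`
belongs to center `⌊i/ℓ⌋`); the `i`-th individual of center `0` values the `i`-th block of `k`
items at `1/√k` each, and every individual of every other center values all items at `1/√m`
(a rank-`m/k`, `1`-incoherent matrix). As in the paper, take center `0` to be a center of
minimum budget. Then at every pure Nash equilibrium `b`, center `0` receives a total fraction of
items of at most `1`, and the induced allocation `ỹ` satisfies
`GMW₁(y*) ≥ (m/√k)/(√m + 1/√k − 1/√m) · GMW₁(ỹ)` for every optimal feasible `y*`. -/
theorem hbw_utilitarian_poa_lower_bound {k m : ℕ} (hk : 0 < k) (hm : 0 < m) (hdvd : k ∣ m)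
    (g : (Fin m → ℝ) → Fin m → ℝ)
    (X : (Fin m → Fin m → ℝ) → Fin m → Fin m → ℝ)
    (hX : IsHBW (g fun _ => ((m / k : ℕ) : ℝ)) X)
    (hmin : ∀ c : Fin m, g (fun _ => ((m / k : ℕ) : ℝ)) ⟨0, hm⟩ ≤ g (fun _ => ((m / k : ℕ) : ℝ)) c)
    {n : ℕ} (hn : n = m * (m / k))
    (ctr : Fin n → Fin m)
    (hctr : ∀ i : Fin n, (ctr i : ℕ) = (i : ℕ) / (m / k))
    (A : Matrix (Fin m) (Fin n) ℝ)
    (hA1 : ∀ (j : Fin m) (i : Fin n), (ctr i : ℕ) = 0 →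
      A j i = if ((i : ℕ) % (m / k)) * k ≤ (j : ℕ) ∧ (j : ℕ) < ((i : ℕ) % (m / k) + 1) * k
        then 1 / Real.sqrt k else 0)
    (hA2 : ∀ (j : Fin m) (i : Fin n), (ctr i : ℕ) ≠ 0 → A j i = 1 / Real.sqrt m)
    (b : Fin m → Fin m → ℝ)
    (heq : HBWEquilibrium X (fun c y => GMW1c A ctr c y) ctr b)
    (ytil : Fin m → Fin n → ℝ)
    (hind : Induced (fun c y => GMW1c A ctr c y) ctr (fun c j => X b j c) ytil) :
    (∑ j, X b j ⟨0, hm⟩ ≤ 1) ∧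
    ∀ ystar : Fin m → Fin n → ℝ, Feasible ystar →
      (∀ y : Fin m → Fin n → ℝ, Feasible y → GMW1 A y ≤ GMW1 A ystar) →
      ((m : ℝ) / Real.sqrt k) / (Real.sqrt m + 1 / Real.sqrt k - 1 / Real.sqrt m) *
          GMW1 A ytil ≤ GMW1 A ystar := by
  classical
  have hb0 : ∀ j c, 0 ≤ b j c := heq.1
  have hkm : k ≤ m := Nat.le_of_dvd hm hdvd
  have hL : 0 < m / k := Nat.div_pos hkm hk
  have hLk : m / k * k = m := Nat.div_mul_cancel hdvd
  have hnpos : 0 < n := by rw [hn]; exact Nat.mul_pos hm hL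
  set c0 : Fin m := ⟨0, hm⟩ with hc0def
  set B : Fin m → ℝ := g fun _ => ((m / k : ℕ) : ℝ) with hBdef
  have hsm : (0:ℝ) < Real.sqrt m := Real.sqrt_pos.2 (by exact_mod_cast hm)
  have hsk : (0:ℝ) < Real.sqrt k := Real.sqrt_pos.2 (by exact_mod_cast hk)
  have hsmm : Real.sqrt m * Real.sqrt m = (m:ℝ) := Real.mul_self_sqrt (by positivity)
  have hskk : Real.sqrt k * Real.sqrt k = (k:ℝ) := Real.mul_self_sqrt (by positivity)
  -- PART 1
  have part1 : ∑ j, X b j c0 ≤ 1 := by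
    by_contra hcon
    push_neg at hcon
    have hXnn : ∀ j c, 0 ≤ X b j c := hX.nonneg b hb0
    have hXle1 : ∀ j c, X b j c ≤ 1 := fun j c =>
      le_trans (Finset.single_le_sum (fun c' _ => hXnn j c') (Finset.mem_univ c))
        (hX.sum_le_one b hb0 j)
    obtain ⟨j1, hj1⟩ : ∃ j1, 0 < X b j1 c0 := by
      by_contra h; push_neg at h
      have : ∑ j, X b j c0 ≤ 0 := Finset.sum_nonpos (fun j _ => h j)
      linarith
    obtain ⟨j2, hj2mem, hj2⟩ : ∃ j2 ∈ Finset.univ.erase j1, 0 < X b j2 c0 := by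
      by_contra h; push_neg at h
      have h1 : ∑ j ∈ Finset.univ.erase j1, X b j c0 ≤ 0 :=
        Finset.sum_nonpos (fun j hj => h j hj)
      have h2 : X b j1 c0 + ∑ j ∈ Finset.univ.erase j1, X b j c0 = ∑ j, X b j c0 :=
        Finset.add_sum_erase Finset.univ (fun j => X b j c0) (Finset.mem_univ j1)
      have := hXle1 j1 c0; linarith
    have hj2ne : j2 ≠ j1 := Finset.ne_of_mem_erase hj2mem
    have hB0 : BudgetOK B b c0 := by
      by_contra h
      have := hX.over_budget b hb0 c0 h j1; linarith
    have hw1 : ∀ c', b j1 c' ≤ b j1 c0 := hX.highest b hb0 j1 c0 (ne_of_gt hj1)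
    have hw2 : ∀ c', b j2 c' ≤ b j2 c0 := hX.highest b hb0 j2 c0 (ne_of_gt hj2)
    have hbpos : ∀ j, 0 < X b j c0 → 0 < b j c0 := by
      intro j hj
      rcases (hb0 j c0).lt_or_eq with h | h
      · exact h
      · exfalso
        have hall : ∀ c, b j c = 0 := by
          intro c
          have hc := hX.highest b hb0 j c0 (ne_of_gt hj) c
          rw [← h] at hc
          exact le_antisymm hc (hb0 j c)
        have := hX.no_bid b hb0 j hall c0; linarith
    have hb1pos : 0 < b j1 c0 := hbpos j1 hj1
    have hb2pos : 0 < b j2 c0 := hbpos j2 hj2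
    have hsum12 : b j1 c0 + b j2 c0 ≤ B c0 := by
      have hmem1 : j1 ∈ Finset.univ.filter (fun j : Fin m => ∀ c', b j c' ≤ b j c0) :=
        Finset.mem_filter.2 ⟨Finset.mem_univ _, hw1⟩
      have hmem2 : j2 ∈ Finset.univ.filter (fun j : Fin m => ∀ c', b j c' ≤ b j c0) :=
        Finset.mem_filter.2 ⟨Finset.mem_univ _, hw2⟩
      calc b j1 c0 + b j2 c0 = ∑ j ∈ ({j1, j2} : Finset (Fin m)), b j c0 :=
            (Finset.sum_pair (f := fun j => b j c0) hj2ne.symm).symm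
        _ ≤ ∑ j ∈ Finset.univ.filter (fun j : Fin m => ∀ c', b j c' ≤ b j c0), b j c0 :=
            Finset.sum_le_sum_of_subset_of_nonneg
              (Finset.insert_subset hmem1 (Finset.singleton_subset_iff.2 hmem2))
              (fun j _ _ => hb0 j c0)
        _ ≤ B c0 := hB0
    -- find a poor center c ≠ c0
    obtain ⟨c, hcne0, hTc⟩ : ∃ c : Fin m, c ≠ c0 ∧ ∑ j, X b j c < 1 := by
      by_contra h; push_neg at h
      have h1 : ∀ c ∈ Finset.univ.erase c0, (1:ℝ) ≤ ∑ j, X b j c :=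
        fun c hc => h c (Finset.ne_of_mem_erase hc)
      have h2 := Finset.card_nsmul_le_sum (Finset.univ.erase c0) (fun c => ∑ j, X b j c) 1 h1
      have hcard : (Finset.univ.erase c0).card = m - 1 := by
        rw [Finset.card_erase_of_mem (Finset.mem_univ _), Finset.card_univ, Fintype.card_fin]
      rw [hcard, nsmul_eq_mul, mul_one] at h2
      have h3 : ∑ j, X b j c0 + ∑ c ∈ Finset.univ.erase c0, ∑ j, X b j c
          = ∑ c, ∑ j, X b j c := Finset.add_sum_erase Finset.univ (fun c => ∑ j, X b j c) (Finset.mem_univ c0)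
      have htot : ∑ c, ∑ j, X b j c ≤ (m:ℝ) := by
        rw [Finset.sum_comm]
        calc ∑ j, ∑ c, X b j c ≤ ∑ _j : Fin m, (1:ℝ) :=
              Finset.sum_le_sum (fun j _ => hX.sum_le_one b hb0 j)
          _ = m := by simp
      have hm1 : ((m-1:ℕ):ℝ) = (m:ℝ) - 1 := by
        have : 1 ≤ m := hm
        push_cast [this]; ring
      rw [hm1] at h2
      have hmr : (1:ℝ) ≤ (m:ℝ) := by exact_mod_cast hm
      linarith
    have hcne : (c : ℕ) ≠ 0 := fun h => hcne0 (Fin.ext h)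
    -- an individual of center c
    have hiex : ∃ i0 : Fin n, i0 ∈ Ic ctr c := by
      have hlt : (c:ℕ) * (m/k) < n := by
        rw [hn]
        exact (Nat.mul_lt_mul_right hL).mpr c.isLt
      refine ⟨⟨(c:ℕ) * (m/k), hlt⟩, ?_⟩
      simp only [Ic, Finset.mem_filter, Finset.mem_univ, true_and]
      apply Fin.ext
      rw [hctr]
      exact Nat.mul_div_cancel _ hL
    obtain ⟨i0, hi0⟩ := hiex
    have hcardpos : 0 < (Ic ctr c).card := Finset.card_pos.2 ⟨i0, hi0⟩
    have hAc : ∀ (j : Fin m), ∀ i ∈ Ic ctr c, A j i = 1 / Real.sqrt m := by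
      intro j i hi
      apply hA2
      have : ctr i = c := (Finset.mem_filter.1 hi).2
      rw [this]; exact hcne
    -- objective upper bound
    have hub : ∀ (x : Fin m → ℝ), ∀ z : Fin m → Fin n → ℝ, (∀ j i, 0 ≤ z j i) →
        (∀ j, ∑ i ∈ Ic ctr c, z j i ≤ x j) →
        GMW1c A ctr c z ≤ (1 / ((Ic ctr c).card : ℝ)) * ((1 / Real.sqrt m) * ∑ j, x j) := by
      intro x z hz1 hz2
      unfold GMW1c
      have key : ∑ i ∈ Ic ctr c, util A z i
          = (1 / Real.sqrt m) * ∑ j, ∑ i ∈ Ic ctr c, z j i := by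
        unfold util
        rw [Finset.sum_comm, Finset.mul_sum]
        refine Finset.sum_congr rfl (fun j _ => ?_)
        rw [Finset.mul_sum]
        exact Finset.sum_congr rfl (fun i hi => by rw [hAc j i hi])
      rw [key]
      have h1 : ∑ j, ∑ i ∈ Ic ctr c, z j i ≤ ∑ j, x j :=
        Finset.sum_le_sum (fun j _ => hz2 j)
      have h2 : (0:ℝ) ≤ 1 / ((Ic ctr c).card : ℝ) := by positivity
      have h3 : (0:ℝ) ≤ 1 / Real.sqrt m := by positivity
      exact mul_le_mul_of_nonneg_left (mul_le_mul_of_nonneg_left h1 h3) h2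
    -- current value bound
    have hTcnn : 0 ≤ ∑ j, X b j c := Finset.sum_nonneg (fun j _ => hXnn j c)
    have hcur : centerBest (GMW1c A ctr c) (Ic ctr c) (fun j => X b j c)
        ≤ (1 / ((Ic ctr c).card : ℝ)) * ((1 / Real.sqrt m) * ∑ j, X b j c) := by
      apply centerBest_le' (by positivity)
      exact hub _
    -- the deviation
    have hBc : b j1 c0 < B c := by
      calc b j1 c0 < b j1 c0 + b j2 c0 := by linarith
        _ ≤ B c0 := hsum12
        _ ≤ B c := hmin c
    have hBcpos : 0 < B c := lt_of_le_of_lt (hb0 j1 c0) hBc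
    set β : Fin m → ℝ := fun j => if j = j1 then B c else 0 with hβdef
    have hβ : ∀ j, 0 ≤ β j := by
      intro j; simp only [hβdef]
      split
      · exact hBcpos.le
      · exact le_refl _
    set b' : Fin m → Fin m → ℝ := fun j' => Function.update (b j') c (β j') with hb'def
    have hb'c : ∀ j, b' j c = β j := fun j => Function.update_self c (β j) (b j)
    have hb'o : ∀ j c', c' ≠ c → b' j c' = b j c' := by
      intro j c' hc'
      exact Function.update_of_ne hc' (β j) (b j)
    have hb'nn : ∀ j c', 0 ≤ b' j c' := by
      intro j c'
      by_cases h : c' = c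
      · rw [h, hb'c]; exact hβ j
      · rw [hb'o j c' h]; exact hb0 j c'
    have hwin : ∀ c', c' ≠ c → b' j1 c' < b' j1 c := by
      intro c' hc'
      rw [hb'o j1 c' hc', hb'c]
      simp only [hβdef, if_pos rfl]
      calc b j1 c' ≤ b j1 c0 := hw1 c'
        _ < B c := hBc
    have hbud : BudgetOK B b' c := by
      unfold BudgetOK
      calc ∑ j ∈ Finset.univ.filter (fun j : Fin m => ∀ c', b' j c' ≤ b' j c), b' j c
          ≤ ∑ j, b' j c := Finset.sum_le_sum_of_subset_of_nonneg
            (Finset.filter_subset _ _) (fun j _ _ => hb'nn j c)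
        _ = B c := by
            simp only [hb'c, hβdef]
            rw [Finset.sum_ite_eq' Finset.univ j1 (fun _ => B c)]
            simp
    have hX1 : X b' j1 c = 1 := hX.strict_win b' hb'nn j1 c hwin hbud
    have hx'nn : ∀ j, 0 ≤ X b' j c := fun j => hX.nonneg b' hb'nn j c
    -- value of deviation
    set z0 : Fin m → Fin n → ℝ := fun j i => if i = i0 then X b' j c else 0 with hz0def
    have hz0nn : ∀ j i, 0 ≤ z0 j i := by
      intro j i; simp only [hz0def]
      split
      · exact hx'nn j
      · exact le_refl _
    have hz0sum : ∀ j, ∑ i ∈ Ic ctr c, z0 j i ≤ X b' j c := by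
      intro j
      simp only [hz0def]
      rw [Finset.sum_ite_eq' (Ic ctr c) i0 (fun _ => X b' j c), if_pos hi0]
    have hz0val : (1 / ((Ic ctr c).card : ℝ)) * (1 / Real.sqrt m) ≤ GMW1c A ctr c z0 := by
      unfold GMW1c
      have key : ∑ i ∈ Ic ctr c, util A z0 i = ∑ j, (1 / Real.sqrt m) * X b' j c := by
        rw [Finset.sum_eq_single_of_mem i0 hi0]
        · unfold util
          refine Finset.sum_congr rfl (fun j _ => ?_)
          simp only [hz0def, if_pos rfl]
          rw [hAc j i0 hi0]
        · intro i _ hine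
          unfold util
          apply Finset.sum_eq_zero
          intro j _
          simp only [hz0def, if_neg hine, mul_zero]
      rw [key]
      have h1 : (1 / Real.sqrt m) * 1 ≤ ∑ j, (1 / Real.sqrt m) * X b' j c := by
        rw [← hX1]
        exact Finset.single_le_sum
          (fun j _ => mul_nonneg (by positivity) (hx'nn j)) (Finset.mem_univ j1)
      have h2 : (0:ℝ) ≤ 1 / ((Ic ctr c).card : ℝ) := by positivity
      calc (1 / ((Ic ctr c).card : ℝ)) * (1 / Real.sqrt m)
          = (1 / ((Ic ctr c).card : ℝ)) * ((1 / Real.sqrt m) * 1) := by ring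
        _ ≤ _ := mul_le_mul_of_nonneg_left h1 h2
    have hdev : GMW1c A ctr c z0 ≤ centerBest (GMW1c A ctr c) (Ic ctr c)
        (fun j => X (fun j' => Function.update (b j') c (β j')) j c) := by
      apply le_centerBest' ((1 / ((Ic ctr c).card : ℝ)) *
        ((1 / Real.sqrt m) * ∑ j, X b' j c)) (hub _) z0 hz0nn hz0sum
    have hnash := heq.2 c β hβ
    have hchain : (1 / ((Ic ctr c).card : ℝ)) * (1 / Real.sqrt m)
        ≤ (1 / ((Ic ctr c).card : ℝ)) * ((1 / Real.sqrt m) * ∑ j, X b j c) := by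
      calc (1 / ((Ic ctr c).card : ℝ)) * (1 / Real.sqrt m) ≤ GMW1c A ctr c z0 := hz0val
        _ ≤ _ := hdev
        _ ≤ _ := hnash
        _ ≤ _ := hcur
    have hP : (0:ℝ) < (1 / ((Ic ctr c).card : ℝ)) * (1 / Real.sqrt m) := by positivity
    nlinarith [hchain, hP, hTc]
  refine ⟨part1, ?_⟩
  intro ystar hfeas hopt
  set L := m / k with hLdef
  have hLn : L ≤ n := by rw [hn]; exact Nat.le_mul_of_pos_left L hm
  have hI0 : ∀ i : Fin n, (ctr i = c0) ↔ (i : ℕ) < L := by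
    intro i
    rw [Fin.ext_iff, hctr i]
    simp only [hc0def]
    exact Nat.div_eq_zero_iff.trans (or_iff_right hL.ne')
  -- Upper bound on GMW1 A ytil
  have hten : ∀ j i, 0 ≤ ytil j i := hind.1
  have ht_nn : ∀ i, 0 ≤ ∑ j, ytil j i := fun i => Finset.sum_nonneg (fun j _ => hten j i)
  have hS0 : ∑ i ∈ Ic ctr c0, (∑ j, ytil j i) ≤ 1 := by
    rw [Finset.sum_comm]
    calc ∑ j, ∑ i ∈ Ic ctr c0, ytil j i ≤ ∑ j, X b j c0 :=
          Finset.sum_le_sum (fun j _ => hind.2.1 c0 j)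
      _ ≤ 1 := part1
  have htotal : ∑ i, (∑ j, ytil j i) ≤ (m:ℝ) := by
    rw [Finset.sum_comm]
    calc ∑ j, ∑ i, ytil j i ≤ ∑ _j : Fin m, (1:ℝ) := by
          refine Finset.sum_le_sum (fun j _ => ?_)
          calc ∑ i, ytil j i
              = ∑ c, ∑ i ∈ Finset.univ.filter (fun i => ctr i = c), ytil j i :=
                (Finset.sum_fiberwise _ _ _).symm
            _ ≤ ∑ c, X b j c := Finset.sum_le_sum (fun c _ => hind.2.1 c j)
            _ ≤ 1 := hX.sum_le_one b hb0 j
      _ = m := by simp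
  set w : Fin n → ℝ := fun i => if ctr i = c0 then 1 / Real.sqrt k else 1 / Real.sqrt m
    with hwdef
  have hutil_le : ∀ i, util A ytil i ≤ w i * ∑ j, ytil j i := by
    intro i
    rw [Finset.mul_sum]
    refine Finset.sum_le_sum (fun j _ => ?_)
    refine mul_le_mul_of_nonneg_right ?_ (hten j i)
    simp only [hwdef]
    by_cases h : ctr i = c0
    · rw [if_pos h, hA1 j i (by rw [h])]
      split
      · exact le_refl _
      · positivity
    · rw [if_neg h, hA2 j i (fun hh => h (Fin.ext hh))]
  have hsplit : ∑ i, w i * (∑ j, ytil j i)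
      = (1 / Real.sqrt k) * (∑ i ∈ Ic ctr c0, ∑ j, ytil j i)
        + (1 / Real.sqrt m) *
          (∑ i ∈ Finset.univ.filter (fun i => ¬ ctr i = c0), ∑ j, ytil j i) := by
    rw [← Finset.sum_filter_add_sum_filter_not Finset.univ (fun i => ctr i = c0)]
    rw [Finset.mul_sum, Finset.mul_sum]
    congr 1
    · refine Finset.sum_congr rfl (fun i hi => ?_)
      have := (Finset.mem_filter.1 hi).2
      simp only [hwdef, if_pos this]
    · refine Finset.sum_congr rfl (fun i hi => ?_)
      have := (Finset.mem_filter.1 hi).2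
      simp only [hwdef, if_neg this]
  have hSR : (∑ i ∈ Ic ctr c0, ∑ j, ytil j i)
      + (∑ i ∈ Finset.univ.filter (fun i => ¬ ctr i = c0), ∑ j, ytil j i)
      = ∑ i, ∑ j, ytil j i :=
    Finset.sum_filter_add_sum_filter_not Finset.univ (fun i => ctr i = c0) _
  have hS0nn : 0 ≤ ∑ i ∈ Ic ctr c0, ∑ j, ytil j i :=
    Finset.sum_nonneg (fun i _ => ht_nn i)
  have hRnn : 0 ≤ ∑ i ∈ Finset.univ.filter (fun i => ¬ ctr i = c0), ∑ j, ytil j i :=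
    Finset.sum_nonneg (fun i _ => ht_nn i)
  have hkmsqrt : Real.sqrt k ≤ Real.sqrt m := Real.sqrt_le_sqrt (by exact_mod_cast hkm)
  have hinvle : 1 / Real.sqrt m ≤ 1 / Real.sqrt k :=
    one_div_le_one_div_of_le hsk hkmsqrt
  have hbm : (1 / Real.sqrt m) * (m:ℝ) = Real.sqrt m := by
    field_simp
    rw [Real.sq_sqrt (Nat.cast_nonneg _)]
  have hytil_ub : GMW1 A ytil
      ≤ (1 / (n:ℝ)) * (Real.sqrt m + 1 / Real.sqrt k - 1 / Real.sqrt m) := by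
    unfold GMW1
    refine mul_le_mul_of_nonneg_left ?_ (by positivity)
    calc ∑ i, util A ytil i ≤ ∑ i, w i * (∑ j, ytil j i) :=
          Finset.sum_le_sum (fun i _ => hutil_le i)
      _ = _ := hsplit
      _ ≤ Real.sqrt m + 1 / Real.sqrt k - 1 / Real.sqrt m := by
          set S0 := ∑ i ∈ Ic ctr c0, ∑ j, ytil j i
          set R := ∑ i ∈ Finset.univ.filter (fun i => ¬ ctr i = c0), ∑ j, ytil j i
          have hSRm : S0 + R ≤ (m:ℝ) := by rw [hSR]; exact htotal
          have key : (1/Real.sqrt k)*S0 + (1/Real.sqrt m)*R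
              = (1/Real.sqrt m)*(S0+R) + (1/Real.sqrt k - 1/Real.sqrt m)*S0 := by ring
          have h1 : (1/Real.sqrt m)*(S0+R) ≤ (1/Real.sqrt m)*(m:ℝ) :=
            mul_le_mul_of_nonneg_left hSRm (by positivity)
          have h2 : (1/Real.sqrt k - 1/Real.sqrt m)*S0 ≤ (1/Real.sqrt k - 1/Real.sqrt m)*1 :=
            mul_le_mul_of_nonneg_left hS0 (by linarith)
          rw [hbm] at h1
          linarith
  -- The good allocation yopt
  set yopt : Fin m → Fin n → ℝ := fun j i => if (i : ℕ) = (j:ℕ)/k then 1 else 0 with hyoptdef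
  have hjkn : ∀ j : Fin m, (j:ℕ)/k < n := by
    intro j
    have h1 : (j:ℕ)/k < L := by
      rw [Nat.div_lt_iff_lt_mul hk]
      calc (j:ℕ) < m := j.isLt
        _ = L * k := hLk.symm
    exact lt_of_lt_of_le h1 hLn
  have hyopt_feas : Feasible yopt := by
    constructor
    · intro j i; simp only [hyoptdef]; split <;> norm_num
    · intro j
      have : ∑ i : Fin n, yopt j i = 1 := by
        rw [Finset.sum_eq_single_of_mem (⟨(j:ℕ)/k, hjkn j⟩ : Fin n) (Finset.mem_univ _)]
        · simp [hyoptdef]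
        · intro i _ hine
          simp only [hyoptdef]
          exact if_neg (fun hh => hine (Fin.ext hh))
      rw [this]
  have hutil_opt : ∀ i : Fin n, util A yopt i
      = if (i:ℕ) < L then Real.sqrt k else 0 := by
    intro i
    by_cases hi : (i:ℕ) < L
    · rw [if_pos hi]
      have hctri : (ctr i : ℕ) = 0 := by rw [hctr i]; exact (Nat.div_eq_zero_iff.trans (or_iff_right hL.ne')).2 hi
      have himod : (i:ℕ) % L = (i:ℕ) := Nat.mod_eq_of_lt hi
      have hterm : ∀ j : Fin m, A j i * yopt j i
          = if (j:ℕ)/k = (i:ℕ) then 1 / Real.sqrt k else 0 := by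
        intro j
        by_cases hj : (i:ℕ) = (j:ℕ)/k
        · rw [if_pos hj.symm]
          have hcond := (nat_div_eq_iff' hk).1 hj.symm
          have : A j i = 1 / Real.sqrt k := by
            rw [hA1 j i hctri, himod, if_pos ⟨hcond.1, hcond.2⟩]
          rw [this]
          simp [hyoptdef, if_pos hj]
        · rw [if_neg (fun hh => hj hh.symm)]
          simp only [hyoptdef, if_neg hj, mul_zero]
      unfold util
      rw [Finset.sum_congr rfl (fun j _ => hterm j)]
      have hcount : ∑ j : Fin m, (if (j:ℕ)/k = (i:ℕ) then 1 / Real.sqrt k else 0)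
          = (k:ℝ) * (1 / Real.sqrt k) := by
        rw [Fin.sum_univ_eq_sum_range (fun x => if x/k = (i:ℕ) then 1 / Real.sqrt k else 0) m]
        rw [← Finset.sum_filter]
        have hfeq : (Finset.range m).filter (fun x => x/k = (i:ℕ))
            = Finset.Ico ((i:ℕ)*k) (((i:ℕ)+1)*k) := by
          ext x
          simp only [Finset.mem_filter, Finset.mem_range, Finset.mem_Ico]
          constructor
          · rintro ⟨_, hx⟩
            exact (nat_div_eq_iff' hk).1 hx
          · rintro ⟨h1, h2⟩
            refine ⟨?_, (nat_div_eq_iff' hk).2 ⟨h1, h2⟩⟩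
            calc x < ((i:ℕ)+1)*k := h2
              _ ≤ L * k := Nat.mul_le_mul_right k hi
              _ = m := hLk
        rw [hfeq, Finset.sum_const, Nat.card_Ico]
        rw [show ((i:ℕ)+1)*k - (i:ℕ)*k = k by rw [add_mul, one_mul, Nat.add_sub_cancel_left]]
        rw [nsmul_eq_mul]
      rw [hcount]
      field_simp
      rw [Real.sq_sqrt (Nat.cast_nonneg _)]
    · rw [if_neg hi]
      unfold util
      apply Finset.sum_eq_zero
      intro j _
      have : yopt j i = 0 := by
        simp only [hyoptdef]
        apply if_neg
        intro hh
        have := hjkn j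
        have h1 : (j:ℕ)/k < L := by
          rw [Nat.div_lt_iff_lt_mul hk]
          calc (j:ℕ) < m := j.isLt
            _ = L * k := hLk.symm
        omega
      rw [this, mul_zero]
  have hGMWopt : GMW1 A yopt = (1 / (n:ℝ)) * ((m:ℝ) / Real.sqrt k) := by
    unfold GMW1
    congr 1
    rw [Finset.sum_congr rfl (fun i _ => hutil_opt i)]
    rw [Fin.sum_univ_eq_sum_range (fun x => if x < L then Real.sqrt k else 0) n]
    rw [← Finset.sum_filter]
    have : (Finset.range n).filter (fun x => x < L) = Finset.range L := by
      ext x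
      simp only [Finset.mem_filter, Finset.mem_range]
      omega
    rw [this, Finset.sum_const, Finset.card_range, nsmul_eq_mul]
    have hLkr : (L:ℝ) * (k:ℝ) = (m:ℝ) := by exact_mod_cast congrArg (Nat.cast (R := ℝ)) hLk
    field_simp
    nlinarith [hskk, hLkr]
  have hopt_lb : (1 / (n:ℝ)) * ((m:ℝ) / Real.sqrt k) ≤ GMW1 A ystar := by
    rw [← hGMWopt]; exact hopt yopt hyopt_feas
  -- combine
  set D := Real.sqrt m + 1 / Real.sqrt k - 1 / Real.sqrt m with hDdef
  have hmr : (1:ℝ) ≤ (m:ℝ) := by exact_mod_cast hm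
  have hD1 : 1 / Real.sqrt m ≤ Real.sqrt m := by
    rw [div_le_iff₀ hsm]; nlinarith
  have hDpos : 0 < D := by
    have : 0 < 1 / Real.sqrt k := by positivity
    simp only [hDdef]; linarith
  have hKnn : 0 ≤ ((m:ℝ) / Real.sqrt k) / D := by positivity
  calc ((m:ℝ) / Real.sqrt k) / D * GMW1 A ytil
      ≤ ((m:ℝ) / Real.sqrt k) / D * ((1 / (n:ℝ)) * D) :=
        mul_le_mul_of_nonneg_left hytil_ub hKnn
    _ = (1 / (n:ℝ)) * (((m:ℝ) / Real.sqrt k) / D * D) := by ring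
    _ = (1 / (n:ℝ)) * ((m:ℝ) / Real.sqrt k) := by
        rw [div_mul_cancel₀ _ (ne_of_gt hDpos)]
    _ ≤ GMW1 A ystar := hopt_lb
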